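/- Let $\alpha>0$, $\rho_\alpha(x,z)=\big((\alpha+1)^2|x|^2+|z|^{2(\alpha+1)}\big)^{\frac{1}{2(\alpha+1)}}$, and $\psi_\alpha=|z|^{2\alpha}/\rho_\alpha^{2\alpha}$. Then for every $C^1$ function $u$ and every point of $\mathbb{R}^{n+1}\setminus\{0\}$ one has $\langle\nabla_\alpha u,\nabla_\alpha\rho_\alpha\rangle = \frac{Z_\alpha u}{\rho_\alpha}\,\psi_\alpha$, where $\langle\nabla_\alpha u,\nabla_\alpha v\rangle=|z|^{2\alpha}\langle\nabla_x u,\nabla_x v\rangle + D_z u\, D_z v$ and $Z_\alpha u=(\alpha+1)\langle x,\nabla_x u\rangle + z D_z u$. -/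

import Mathlib

open Real Set

/-- for `α > 0`, `ρ_α` the pseudo-gauge, `ψ_α = |z|^{2α}/ρ_α^{2α}`, and every
`C¹` function `u`, one has on `ℝ^{n+1} \ {0}`:
`⟨∇_α u, ∇_α ρ_α⟩ = (Z_α u / ρ_α) ψ_α`, where
`⟨∇_α u, ∇_α v⟩ = |z|^{2α} ⟨∇ₓu, ∇ₓv⟩ + D_z u D_z v` and
`Z_α u = (α+1)⟨x, ∇ₓu⟩ + z D_z u`. -/
theorem stmt7 (n : ℕ) (α : ℝ) (hα : 0 < α)
    (ρ : (Fin n → ℝ) × ℝ → ℝ)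
    (hρ : ∀ p : (Fin n → ℝ) × ℝ,
      ρ p = ((α + 1) ^ 2 * (∑ i : Fin n, p.1 i ^ 2) + |p.2| ^ (2 * (α + 1)))
              ^ (1 / (2 * (α + 1))))
    (u : (Fin n → ℝ) × ℝ → ℝ) (hu : ContDiff ℝ 1 u) :
    ∀ p : (Fin n → ℝ) × ℝ, p ≠ 0 →
      |p.2| ^ (2 * α) *
            (∑ i : Fin n, fderiv ℝ u p (Pi.single i 1, 0) * fderiv ℝ ρ p (Pi.single i 1, 0))
          + fderiv ℝ u p (0, 1) * fderiv ℝ ρ p (0, 1)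
        = (fderiv ℝ u p ((α + 1) • p.1, p.2) / ρ p) * (|p.2| ^ (2 * α) / (ρ p) ^ (2 * α)) := by
  intro p hp
  have hα1 : (0:ℝ) < α + 1 := by linarith
  have h2α1 : (0:ℝ) < 2 * (α + 1) := by linarith
  set c : ℝ := 1 / (2 * (α + 1)) with hc
  set x : Fin n → ℝ := p.1 with hx
  set z : ℝ := p.2 with hz
  -- rewrite |w|^(2t) = (w^2)^t
  have habs : ∀ (w t : ℝ), |w| ^ (2 * t) = (w ^ 2 : ℝ) ^ t := by
    intro w t
    rw [Real.rpow_mul (abs_nonneg w), Real.rpow_two, sq_abs]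
  set G : ℝ := (α + 1) ^ 2 * (∑ i : Fin n, x i ^ 2) + (z ^ 2 : ℝ) ^ (α + 1) with hG
  have hρfun : ρ = fun q : (Fin n → ℝ) × ℝ =>
      ((α + 1) ^ 2 * (∑ i : Fin n, q.1 i ^ 2) + (q.2 ^ 2 : ℝ) ^ (α + 1)) ^ c := by
    funext q
    rw [hρ q]
    congr 2
    have := habs q.2 (α + 1)
    rw [← this]
  have hρp : ρ p = G ^ c := by rw [hρfun]
  -- positivity of G
  have hGpos : 0 < G := by
    have h' : p.1 ≠ 0 ∨ p.2 ≠ 0 := by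
      by_contra h
      push_neg at h
      exact hp (Prod.ext h.1 h.2)
    rcases h' with h | h
    · obtain ⟨i, hi⟩ := Function.ne_iff.mp h
      simp only [Pi.zero_apply] at hi
      have hsum : 0 < ∑ i : Fin n, x i ^ 2 := by
        apply Finset.sum_pos' (fun j _ => sq_nonneg _)
        exact ⟨i, Finset.mem_univ i, by positivity⟩
      have h1 : (0:ℝ) ≤ (z ^ 2 : ℝ) ^ (α + 1) := Real.rpow_nonneg (sq_nonneg z) _
      have h2 := mul_pos (pow_pos hα1 2) hsum
      linarith [hG]
    · have h1 : (0:ℝ) < (z ^ 2 : ℝ) ^ (α + 1) := Real.rpow_pos_of_pos (by positivity) _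
      have hsum : 0 ≤ ∑ i : Fin n, x i ^ 2 := Finset.sum_nonneg (fun j _ => sq_nonneg _)
      have h2 := mul_nonneg (sq_nonneg (α+1)) hsum
      linarith [hG]
  -- coordinate linear maps
  set Li : (i : Fin n) → ((Fin n → ℝ) × ℝ) →L[ℝ] ℝ := fun i =>
    (ContinuousLinearMap.proj i).comp (ContinuousLinearMap.fst ℝ (Fin n → ℝ) ℝ) with hLi
  have hA : ∀ i : Fin n, HasFDerivAt (fun q : (Fin n → ℝ) × ℝ => q.1 i ^ 2)
      ((2 * x i) • Li i) p := by
    intro i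
    have h1 : HasDerivAt (fun t : ℝ => t ^ 2) (2 * x i) (x i) := by
      simpa using hasDerivAt_pow 2 (x i)
    exact h1.comp_hasFDerivAt p (Li i).hasFDerivAt
  have hAsum : HasFDerivAt (fun q : (Fin n → ℝ) × ℝ => ∑ i : Fin n, q.1 i ^ 2)
      (∑ i : Fin n, (2 * x i) • Li i) p := HasFDerivAt.fun_sum (fun i _ => hA i)
  have hB : HasDerivAt (fun w : ℝ => (w ^ 2 : ℝ) ^ (α + 1))
      ((α + 1) * (z ^ 2 : ℝ) ^ α * (2 * z)) z := by
    have h1 : HasDerivAt (fun w : ℝ => w ^ 2) (2 * z) z := by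
      simpa using hasDerivAt_pow 2 z
    have h2 : HasDerivAt (fun t : ℝ => t ^ (α + 1)) ((α + 1) * (z ^ 2 : ℝ) ^ α) (z ^ 2) := by
      have h3 := Real.hasDerivAt_rpow_const (x := z ^ 2) (p := α + 1) (Or.inr (by linarith))
      rwa [show α + 1 - 1 = α by ring] at h3
    exact HasDerivAt.comp (h := fun w : ℝ => w ^ 2) (x := z) h2 h1
  set d : ℝ := (α + 1) * (z ^ 2 : ℝ) ^ α * (2 * z) with hd
  set LG : ((Fin n → ℝ) × ℝ) →L[ℝ] ℝ :=
    (α + 1) ^ 2 • (∑ i : Fin n, (2 * x i) • Li i)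
      + d • ContinuousLinearMap.snd ℝ (Fin n → ℝ) ℝ with hLG
  have hGfd : HasFDerivAt (fun q : (Fin n → ℝ) × ℝ =>
      (α + 1) ^ 2 * (∑ i : Fin n, q.1 i ^ 2) + (q.2 ^ 2 : ℝ) ^ (α + 1)) LG p := by
    have h1 := hAsum.const_mul ((α + 1) ^ 2)
    have h2 := hB.comp_hasFDerivAt p (hasFDerivAt_snd (𝕜 := ℝ) (E := Fin n → ℝ) (F := ℝ) (p := p))
    exact h1.add h2
  set k : ℝ := c * G ^ (c - 1) with hk
  have hρfd : HasFDerivAt ρ (k • LG) p := by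
    rw [hρfun]
    have h1 : HasDerivAt (fun t : ℝ => t ^ c) (c * G ^ (c - 1)) G :=
      Real.hasDerivAt_rpow_const (Or.inl hGpos.ne')
    exact h1.comp_hasFDerivAt p hGfd
  have hfd : fderiv ℝ ρ p = k • LG := hρfd.fderiv
  -- values of the derivative of ρ
  have hval1 : ∀ i : Fin n,
      fderiv ℝ ρ p ((Pi.single i 1 : Fin n → ℝ), (0:ℝ)) = k * ((α + 1) ^ 2 * (2 * x i)) := by
    intro i
    rw [hfd]
    simp [hLG, hLi, ContinuousLinearMap.sum_apply, Pi.single_apply, mul_ite,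
      Finset.sum_ite_eq]
  have hval2 : fderiv ℝ ρ p ((0 : Fin n → ℝ), (1:ℝ)) = k * d := by
    rw [hfd]
    simp [hLG, hLi, ContinuousLinearMap.sum_apply]
  -- linearity of the derivative of u
  set D := fderiv ℝ u p with hDdef
  have hvec : (((α + 1) • x, z) : (Fin n → ℝ) × ℝ) =
      (∑ i : Fin n, ((α + 1) * x i) • (((Pi.single i 1 : Fin n → ℝ), (0:ℝ))))
        + z • (((0 : Fin n → ℝ), (1:ℝ))) := by
    have h1 : ((α + 1) • x) = ∑ i : Fin n, ((α + 1) * x i) • (Pi.single i 1 : Fin n → ℝ) := by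
      funext j
      simp [Finset.sum_apply, Pi.single_apply, mul_ite, Finset.sum_ite_eq]
    apply Prod.ext
    · simp [Prod.fst_sum, h1]
    · simp [Prod.snd_sum]
  have hZ : D ((α + 1) • x, z)
      = (α + 1) * (∑ i : Fin n, x i * D ((Pi.single i 1 : Fin n → ℝ), (0:ℝ)))
        + z * D ((0 : Fin n → ℝ), (1:ℝ)) := by
    rw [hvec, map_add, map_sum, map_smul]
    simp only [map_smul, smul_eq_mul]
    rw [Finset.mul_sum]
    congr 1
    exact Finset.sum_congr rfl (fun i _ => by ring)
  set S : ℝ := ∑ i : Fin n, x i * D ((Pi.single i 1 : Fin n → ℝ), (0:ℝ)) with hS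
  set T : ℝ := D ((0 : Fin n → ℝ), (1:ℝ)) with hT
  -- power identities
  have hpow : G ^ c * (G ^ c) ^ (2 * α) = G ^ (1 - c) := by
    rw [← Real.rpow_mul hGpos.le c (2 * α), ← Real.rpow_add hGpos]
    congr 1
    rw [hc]
    field_simp
    ring
  have hinv : G ^ (c - 1) = (G ^ (1 - c))⁻¹ := by
    rw [← Real.rpow_neg hGpos.le]
    congr 1
    ring
  have hP : (0:ℝ) < G ^ (1 - c) := Real.rpow_pos_of_pos hGpos _
  -- final computation
  rw [habs z α, hρp, hZ, hval2]
  simp only [hval1]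
  have hsum2 : (∑ i : Fin n, D ((Pi.single i 1 : Fin n → ℝ), (0:ℝ))
        * (k * ((α + 1) ^ 2 * (2 * x i)))) = k * ((α + 1) ^ 2 * 2) * S := by
    rw [hS, Finset.mul_sum]
    exact Finset.sum_congr rfl (fun i _ => by ring)
  rw [hsum2, div_mul_div_comm, mul_comm (G ^ c) ((G ^ c) ^ (2 * α)), mul_comm ((G^c)^(2*α)) (G^c), hpow,
    hk, hinv, hd, hc]
  field_simp
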